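/- For every integer M ≥ 1 and every p with 1 ≤ p ≤ M, the coefficient λ_{2p-1}^{2M} := 2(-1)^{p-1}[(2M-1)!!]^2 / ((2M+2p-2)!! (2M-2p)!! (2p-1)) satisfies the normalization identity ∑_{p=1}^{M} λ_{2p-1}^{2M} = 1. -/

import Mathlib

open Nat Finset

/-- The coefficient `λ_{2p-1}^{2M}` of the `2M`-th order staggered finite
difference approximation of the first derivative. -/
noncomputable def lamFD (M p : ℕ) : ℝ :=
  2 * (-1 : ℝ) ^ (p - 1) * ((2 * M - 1)‼ : ℝ) ^ 2 /
    (((2 * M + 2 * p - 2)‼ : ℝ) * ((2 * M - 2 * p)‼ : ℝ) * (2 * p - 1 : ℝ))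

/-- The WZ-style certificate for the telescoping proof. -/
noncomputable def lamG (M p : ℕ) : ℝ :=
  (-1 : ℝ) ^ p * ((2 * M - 1)‼ : ℝ) ^ 2 * ((p : ℝ) - 1) /
    ((M : ℝ) * ((2 * M + 2 * p - 2)‼ : ℝ) * ((2 * M + 2 - 2 * p)‼ : ℝ))

lemma lamG_one (M : ℕ) : lamG M 1 = 0 := by
  simp [lamG]

lemma lamFD_step (M k : ℕ) (hk : k + 1 ≤ M) :
    lamFD (M + 1) (k + 1) = lamFD M (k + 1) + (lamG M (k + 2) - lamG M (k + 1)) := by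
  have hM : 1 ≤ M := le_trans (Nat.le_add_left 1 k) hk
  have e1 : 2 * (M + 1) - 1 = (2 * M - 1) + 2 := by omega
  have e2 : 2 * (M + 1) + 2 * (k + 1) - 2 = (2 * M + 2 * (k + 1) - 2) + 2 := by omega
  have e3 : 2 * (M + 1) - 2 * (k + 1) = (2 * M - 2 * (k + 1)) + 2 := by omega
  have e4 : 2 * M + 2 * (k + 2) - 2 = (2 * M + 2 * (k + 1) - 2) + 2 := by omega
  have e5 : 2 * M + 2 - 2 * (k + 1) = (2 * M - 2 * (k + 1)) + 2 := by omega
  have e6 : 2 * M + 2 - 2 * (k + 2) = 2 * M - 2 * (k + 1) := by omega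
  rw [lamFD, lamFD, lamG, lamG, e1, e2, e3, e4, e5, e6,
    Nat.doubleFactorial_add_two, Nat.doubleFactorial_add_two, Nat.doubleFactorial_add_two]
  have c1 : ((2 * M - 1 + 2 : ℕ) : ℝ) = 2 * (M : ℝ) + 1 := by
    push_cast [Nat.cast_sub (by omega : 1 ≤ 2 * M)]; ring
  have c2 : ((2 * M + 2 * (k + 1) - 2 + 2 : ℕ) : ℝ) = 2 * (M : ℝ) + 2 * ((k : ℝ) + 1) := by
    push_cast [Nat.cast_sub (by omega : 2 ≤ 2 * M + 2 * (k + 1))]; ring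
  have c3 : ((2 * M - 2 * (k + 1) + 2 : ℕ) : ℝ) = 2 * (M : ℝ) + 2 - 2 * ((k : ℝ) + 1) := by
    push_cast [Nat.cast_sub (by omega : 2 * (k + 1) ≤ 2 * M)]; ring
  rw [Nat.cast_mul, Nat.cast_mul, Nat.cast_mul, c1, c2, c3]
  have hb : ((2 * M + 2 * (k + 1) - 2)‼ : ℝ) ≠ 0 := by
    exact_mod_cast (Nat.doubleFactorial_pos _).ne'
  have hc : ((2 * M - 2 * (k + 1))‼ : ℝ) ≠ 0 := by
    exact_mod_cast (Nat.doubleFactorial_pos _).ne'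
  have hm : (M : ℝ) ≠ 0 := by exact_mod_cast (by omega : M ≠ 0)
  have hq : (2 * ((k + 1 : ℕ) : ℝ) - 1) ≠ 0 := by
    push_cast
    have : (0 : ℝ) ≤ (k : ℝ) := Nat.cast_nonneg k
    nlinarith
  have hx : (2 * (M : ℝ) + 2 * ((k : ℝ) + 1)) ≠ 0 := by positivity
  have hy : (2 * (M : ℝ) + 2 - 2 * ((k : ℝ) + 1)) ≠ 0 := by
    have : (k : ℝ) + 1 ≤ (M : ℝ) := by exact_mod_cast hk
    nlinarith
  have hy' : (M : ℝ) + 1 - ((k : ℝ) + 1) ≠ 0 := by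
    have : (k : ℝ) + 1 ≤ (M : ℝ) := by exact_mod_cast hk
    linarith
  push_cast at hq ⊢
  field_simp
  ring

lemma lamFD_boundary (M : ℕ) (hM : 1 ≤ M) :
    lamG M (M + 1) + lamFD (M + 1) (M + 1) = 0 := by
  have e1 : 2 * M + 2 * (M + 1) - 2 = 4 * M := by omega
  have e2 : 2 * M + 2 - 2 * (M + 1) = 0 := by omega
  have e3 : 2 * (M + 1) - 1 = (2 * M - 1) + 2 := by omega
  have e4 : 2 * (M + 1) + 2 * (M + 1) - 2 = 4 * M + 2 := by omega
  have e5 : 2 * (M + 1) - 2 * (M + 1) = 0 := by omega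
  have e6 : (4 * M + 2) = (4 * M) + 2 := by omega
  rw [lamG, lamFD, e1, e2, e3, e4, e5, e6,
    Nat.doubleFactorial_add_two, Nat.doubleFactorial_add_two]
  have c1 : ((2 * M - 1 + 2 : ℕ) : ℝ) = 2 * (M : ℝ) + 1 := by
    push_cast [Nat.cast_sub (by omega : 1 ≤ 2 * M)]; ring
  rw [Nat.cast_mul, Nat.cast_mul, c1]
  have hd : ((4 * M)‼ : ℝ) ≠ 0 := by exact_mod_cast (Nat.doubleFactorial_pos _).ne'
  have hm : (M : ℝ) ≠ 0 := by exact_mod_cast (by omega : M ≠ 0)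
  have hmpos : (0 : ℝ) < (M : ℝ) := by exact_mod_cast hM
  have h2 : (2 * ((M + 1 : ℕ) : ℝ) - 1) ≠ 0 := by push_cast; nlinarith
  have h3 : ((4 * M + 2 : ℕ) : ℝ) ≠ 0 := by push_cast; positivity
  push_cast at h2 h3 ⊢
  norm_num [Nat.doubleFactorial]
  field_simp
  ring

/-- Normalization identity: `∑_{p=1}^{M} λ_{2p-1}^{2M} = 1`. -/
theorem lamFD_sum_eq_one (M : ℕ) (hM : 1 ≤ M) :
    ∑ p ∈ Finset.Icc 1 M, lamFD M p = 1 := by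
  induction M, hM using Nat.le_induction with
  | base =>
    simp [lamFD, Nat.doubleFactorial]
    norm_num
  | succ M hM ih =>
    rw [Finset.sum_Icc_succ_top (by omega) _]
    have h2 : ∀ p ∈ Finset.Icc 1 M,
        lamFD (M + 1) p = lamFD M p + (lamG M (p + 1) - lamG M p) := by
      intro p hp
      simp only [Finset.mem_Icc] at hp
      obtain ⟨k, rfl⟩ : ∃ k, p = k + 1 := ⟨p - 1, by omega⟩
      exact lamFD_step M k hp.2
    rw [Finset.sum_congr rfl h2, Finset.sum_add_distrib, ih]
    have h3 : ∑ p ∈ Finset.Icc 1 M, (lamG M (p + 1) - lamG M p)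
        = lamG M (M + 1) - lamG M 1 := by
      rw [← Finset.Ico_add_one_right_eq_Icc, Finset.sum_Ico_eq_sum_range]
      calc ∑ i ∈ Finset.range (M + 1 - 1), (lamG M (1 + i + 1) - lamG M (1 + i))
          = ∑ i ∈ Finset.range M, (lamG M (i + 1 + 1) - lamG M (i + 1)) := by
            refine Finset.sum_congr rfl fun i _ => ?_
            rw [Nat.add_comm 1 i]
        _ = lamG M (M + 1) - lamG M (0 + 1) :=
            Finset.sum_range_sub (fun j => lamG M (j + 1)) M
        _ = lamG M (M + 1) - lamG M 1 := by rw [Nat.zero_add]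
    rw [h3, lamG_one]
    have h4 := lamFD_boundary M hM
    linarith
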